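/- arXiv:2010.10155 — 3 statements merged into one kernel-verified Lean document; each statement's English description precedes it below -/
import Mathlib

section
/- Let Φ(X) = ∑_{n≥0} count(n)·Xⁿ be the ordinary generating function (a formal power series over ℚ) of the number count(n) of formulae of size n. Then Φ satisfies the algebraic equation (1 − X)²·Φ(X) = X³ + (1 − X)²·( 3X·Φ(X) + 2X·Φ(X)² ). (Equivalently, Φ(X) = X·(X/(1−X))² + 2X·Φ(X) + X·Φ(X) + 2X·Φ(X)², the five summands on the right corresponding to atomic formulae, the two quantifiers, negation, and the two binary connectives.) -/
/-- Formulae of the first-order language of set theory (one binary membership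
predicate, no function symbols) in De Bruijn notation, with the functionally
complete connective set `{∧, ∨, ¬}`. -/
inductive Fml : Type
  | mem  : ℕ → ℕ → Fml        -- atomic formula (i ∈ j), De Bruijn indices i, j
  | neg  : Fml → Fml           -- ¬φ
  | conj : Fml → Fml → Fml     -- φ ∧ ψ
  | disj : Fml → Fml → Fml     -- φ ∨ ψ
  | all  : Fml → Fml           -- ∀φ
  | ex   : Fml → Fml           -- ∃φ

/-- Natural size model: every constructor has weight 1, index `i` is written
in unary as `Sⁱ0` (hence contributes `i + 1`), so `|i ∈ j| = i + j + 3`. -/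
def Fml.size : Fml → ℕ
  | mem i j  => i + j + 3
  | neg φ    => φ.size + 1
  | conj φ ψ => φ.size + ψ.size + 1
  | disj φ ψ => φ.size + ψ.size + 1
  | all φ    => φ.size + 1
  | ex φ     => φ.size + 1

/-- Prefix-code encoding of formulae over an 8-letter alphabet. -/
def Fml.code : Fml → List (Fin 8)
  | mem i j  => 0 :: (List.replicate i 1 ++ 2 :: (List.replicate j 1 ++ [2]))
  | neg φ    => 3 :: φ.code
  | conj φ ψ => 4 :: (φ.code ++ ψ.code)
  | disj φ ψ => 5 :: (φ.code ++ ψ.code)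
  | all φ    => 6 :: φ.code
  | ex φ     => 7 :: φ.code

theorem Fml.code_length (φ : Fml) : φ.code.length = φ.size := by
  induction φ <;> simp [Fml.code, Fml.size, *] <;> omega

theorem unary_inj : ∀ (i j : ℕ) (l l' : List (Fin 8)),
    List.replicate i 1 ++ 2 :: l = List.replicate j 1 ++ 2 :: l' → i = j ∧ l = l' := by
  intro i
  induction i with
  | zero => intro j l l' h; cases j with
    | zero => simpa using h
    | succ j => simp [List.replicate_succ] at h
  | succ i ih =>
    intro j l l' h
    cases j with
    | zero => simp [List.replicate_succ] at h
    | succ j =>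
      simp only [List.replicate_succ, List.cons_append, List.cons.injEq] at h
      obtain ⟨h1, h2⟩ := ih j l l' h.2
      exact ⟨by omega, h2⟩

theorem Fml.code_prefix_inj : ∀ (φ ψ : Fml) (l l' : List (Fin 8)),
    φ.code ++ l = ψ.code ++ l' → φ = ψ ∧ l = l' := by
  intro φ
  induction φ with
  | mem i j =>
    intro ψ l l' h
    cases ψ <;> simp only [Fml.code, List.cons_append, List.cons.injEq, List.append_assoc] at h
    case mem i' j' =>
      obtain ⟨h1, h2⟩ := unary_inj i i' _ _ h.2
      obtain ⟨h3, h4⟩ := unary_inj j j' _ _ h2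
      exact ⟨by rw [h1, h3], h4⟩
    all_goals exact absurd h.1 (by decide)
  | neg φ ih =>
    intro ψ l l' h
    cases ψ <;> simp only [Fml.code, List.cons_append, List.cons.injEq, List.append_assoc] at h
    case neg ψ => obtain ⟨h1, h2⟩ := ih ψ l l' h.2; exact ⟨by rw [h1], h2⟩
    all_goals exact absurd h.1 (by decide)
  | all φ ih =>
    intro ψ l l' h
    cases ψ <;> simp only [Fml.code, List.cons_append, List.cons.injEq, List.append_assoc] at h
    case all ψ => obtain ⟨h1, h2⟩ := ih ψ l l' h.2; exact ⟨by rw [h1], h2⟩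
    all_goals exact absurd h.1 (by decide)
  | ex φ ih =>
    intro ψ l l' h
    cases ψ <;> simp only [Fml.code, List.cons_append, List.cons.injEq, List.append_assoc] at h
    case ex ψ => obtain ⟨h1, h2⟩ := ih ψ l l' h.2; exact ⟨by rw [h1], h2⟩
    all_goals exact absurd h.1 (by decide)
  | conj φ₁ φ₂ ih1 ih2 =>
    intro ψ l l' h
    cases ψ <;> simp only [Fml.code, List.cons_append, List.cons.injEq, List.append_assoc] at h
    case conj ψ₁ ψ₂ =>
      obtain ⟨h1, h2⟩ := ih1 ψ₁ _ _ h.2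
      obtain ⟨h3, h4⟩ := ih2 ψ₂ _ _ h2
      exact ⟨by rw [h1, h3], h4⟩
    all_goals exact absurd h.1 (by decide)
  | disj φ₁ φ₂ ih1 ih2 =>
    intro ψ l l' h
    cases ψ <;> simp only [Fml.code, List.cons_append, List.cons.injEq, List.append_assoc] at h
    case disj ψ₁ ψ₂ =>
      obtain ⟨h1, h2⟩ := ih1 ψ₁ _ _ h.2
      obtain ⟨h3, h4⟩ := ih2 ψ₂ _ _ h2
      exact ⟨by rw [h1, h3], h4⟩
    all_goals exact absurd h.1 (by decide)

theorem Fml.code_injective : Function.Injective Fml.code := by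
  intro φ ψ h
  exact (Fml.code_prefix_inj φ ψ [] [] (by simpa using h)).1

instance listLenFinite (n : ℕ) : Finite {l : List (Fin 8) // l.length = n} :=
  (inferInstance : Finite (List.Vector (Fin 8) n))

instance fmlSizeFinite (n : ℕ) : Finite {φ : Fml // φ.size = n} := by
  have hinj : Function.Injective (fun φ : {φ : Fml // φ.size = n} =>
      (⟨φ.1.code, by rw [Fml.code_length, φ.2]⟩ : {l : List (Fin 8) // l.length = n})) := by
    intro a b h
    exact Subtype.ext (Fml.code_injective (congrArg Subtype.val h))
  exact Finite.of_injective _ hinj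

/-- `φ.OpenAt m` means `φ` is `m`-open: prepending `m` quantifiers turns `φ`
into a sentence. Sentences are the `0`-open formulae. -/
def Fml.OpenAt : ℕ → Fml → Prop
  | m, mem i j  => i < m ∧ j < m
  | m, neg φ    => φ.OpenAt m
  | m, conj φ ψ => φ.OpenAt m ∧ ψ.OpenAt m
  | m, disj φ ψ => φ.OpenAt m ∧ ψ.OpenAt m
  | m, all φ    => φ.OpenAt (m + 1)
  | m, ex φ     => φ.OpenAt (m + 1)

/-- `count n`: the number of formulae of size `n`. -/
noncomputable def count (n : ℕ) : ℕ := Nat.card {φ : Fml // φ.size = n}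

/-- `countOpen m n`: the number of `m`-open formulae of size `n`. -/
noncomputable def countOpen (m n : ℕ) : ℕ :=
  Nat.card {φ : Fml // φ.OpenAt m ∧ φ.size = n}

/-- The ordinary generating function `Φ(X) = ∑_{n≥0} count(n)·Xⁿ` of the number
of formulae of size `n`, as a formal power series over `ℚ`. -/
noncomputable def Phi : PowerSeries ℚ := PowerSeries.mk fun n => (count n : ℚ)

instance fmlPairFinite (n : ℕ) : Finite {q : Fml × Fml // q.1.size + q.2.size = n} := by
  have hinj : Function.Injective (fun q : {q : Fml × Fml // q.1.size + q.2.size = n} =>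
      (⟨Fml.conj q.1.1 q.1.2, by simp [Fml.size, q.2]⟩ : {φ : Fml // φ.size = n + 1})) := by
    rintro ⟨⟨a, b⟩, h⟩ ⟨⟨c, d⟩, h'⟩ he
    simp only [Subtype.mk.injEq, Fml.conj.injEq] at he
    simp [he.1, he.2]
  exact Finite.of_injective _ hinj

/-- The atomic formulae of size `n` are counted by `n - 2` (truncated subtraction). -/
def atomEquiv (n : ℕ) : {p : ℕ × ℕ // p.1 + p.2 + 3 = n} ≃ Fin (n - 2) where
  toFun p := ⟨p.1.1, by have := p.2; omega⟩
  invFun k := ⟨(k.1, n - 3 - k.1), by have := k.2; show k.1 + (n - 3 - k.1) + 3 = n; omega⟩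
  left_inv := by rintro ⟨⟨a, b⟩, h⟩; simp; omega
  right_inv := by rintro ⟨k, hk⟩; rfl

theorem card_atoms (n : ℕ) : Nat.card {p : ℕ × ℕ // p.1 + p.2 + 3 = n} = n - 2 := by
  rw [Nat.card_congr (atomEquiv n), Nat.card_eq_fintype_card, Fintype.card_fin]

def pairSigmaEquiv (m : ℕ) : {q : Fml × Fml // q.1.size + q.2.size = m} ≃
    Σ k : Fin (m + 1), {φ : Fml // φ.size = k.1} × {φ : Fml // φ.size = m - k.1} where
  toFun q := ⟨⟨q.1.1.size, by have := q.2; omega⟩, ⟨q.1.1, rfl⟩,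
    ⟨q.1.2, by show q.1.2.size = m - q.1.1.size; have := q.2; omega⟩⟩
  invFun x := ⟨(x.2.1.1, x.2.2.1), by
    have h1 : x.2.1.1.size = x.1.1 := x.2.1.2
    have h2 : x.2.2.1.size = m - x.1.1 := x.2.2.2
    have h3 := x.1.2; show x.2.1.1.size + x.2.2.1.size = m; omega⟩
  left_inv := by rintro ⟨⟨a, b⟩, h⟩; rfl
  right_inv := by
    rintro ⟨⟨k, hk⟩, ⟨φ, hφ⟩, ⟨ψ, hψ⟩⟩
    have hφ' : φ.size = k := hφ
    subst hφ'
    rfl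

theorem nat_card_sigma {ι : Type*} [Fintype ι] (β : ι → Type*) [∀ i, Finite (β i)] :
    Nat.card (Σ i, β i) = ∑ i, Nat.card (β i) := by
  letI := fun i => Fintype.ofFinite (β i)
  simp [Nat.card_eq_fintype_card]

theorem card_fml_pairs (m : ℕ) : Nat.card {q : Fml × Fml // q.1.size + q.2.size = m}
    = ∑ k ∈ Finset.range (m + 1), count k * count (m - k) := by
  rw [Nat.card_congr (pairSigmaEquiv m), nat_card_sigma]
  rw [← Fin.sum_univ_eq_sum_range (fun k => count k * count (m - k)) (m + 1)]
  exact Finset.sum_congr rfl fun k _ => Nat.card_prod _ _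

def decEquiv (n : ℕ) : {φ : Fml // φ.size = n + 1} ≃
    {p : ℕ × ℕ // p.1 + p.2 + 3 = n + 1} ⊕
    (({φ : Fml // φ.size = n} ⊕ {φ : Fml // φ.size = n}) ⊕ {φ : Fml // φ.size = n}) ⊕
    ({q : Fml × Fml // q.1.size + q.2.size = n} ⊕ {q : Fml × Fml // q.1.size + q.2.size = n})
    where
  toFun x := match x with
    | ⟨.mem i j, h⟩ => .inl ⟨(i, j), h⟩
    | ⟨.neg φ, h⟩ => .inr (.inl (.inl (.inl ⟨φ, Nat.succ_injective h⟩)))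
    | ⟨.all φ, h⟩ => .inr (.inl (.inl (.inr ⟨φ, Nat.succ_injective h⟩)))
    | ⟨.ex φ, h⟩ => .inr (.inl (.inr ⟨φ, Nat.succ_injective h⟩))
    | ⟨.conj φ ψ, h⟩ => .inr (.inr (.inl ⟨(φ, ψ), Nat.succ_injective h⟩))
    | ⟨.disj φ ψ, h⟩ => .inr (.inr (.inr ⟨(φ, ψ), Nat.succ_injective h⟩))
  invFun x := match x with
    | .inl ⟨(i, j), h⟩ => ⟨.mem i j, h⟩
    | .inr (.inl (.inl (.inl ⟨φ, h⟩))) => ⟨.neg φ, congrArg (· + 1) h⟩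
    | .inr (.inl (.inl (.inr ⟨φ, h⟩))) => ⟨.all φ, congrArg (· + 1) h⟩
    | .inr (.inl (.inr ⟨φ, h⟩)) => ⟨.ex φ, congrArg (· + 1) h⟩
    | .inr (.inr (.inl ⟨(φ, ψ), h⟩)) => ⟨.conj φ ψ, congrArg (· + 1) h⟩
    | .inr (.inr (.inr ⟨(φ, ψ), h⟩)) => ⟨.disj φ ψ, congrArg (· + 1) h⟩
  left_inv := by rintro ⟨(⟨i,j⟩ | φ | ⟨φ,ψ⟩ | ⟨φ,ψ⟩ | φ | φ), h⟩ <;> rfl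
  right_inv := by
    rintro (⟨⟨i,j⟩,h⟩ | ((⟨φ,h⟩ | ⟨φ,h⟩) | ⟨φ,h⟩) | (⟨⟨φ,ψ⟩,h⟩ | ⟨⟨φ,ψ⟩,h⟩)) <;> rfl

theorem count_succ (n : ℕ) :
    count (n + 1) = (n + 1 - 2) + 3 * count n
      + 2 * ∑ k ∈ Finset.range (n + 1), count k * count (n - k) := by
  have : Finite {p : ℕ × ℕ // p.1 + p.2 + 3 = n + 1} :=
    Finite.of_equiv _ (atomEquiv (n + 1)).symm
  rw [count, Nat.card_congr (decEquiv n)]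
  simp only [Nat.card_sum, card_atoms, card_fml_pairs]
  show _ = _ + 3 * Nat.card {φ : Fml // φ.size = n} + 2 * _
  ring

theorem Fml.three_le_size (φ : Fml) : 3 ≤ φ.size := by
  induction φ <;> simp [Fml.size] <;> omega

theorem count_zero : count 0 = 0 := by
  have : IsEmpty {φ : Fml // φ.size = 0} :=
    ⟨fun φ => by have := φ.1.three_le_size; omega⟩
  simp [count]

open PowerSeries

/-- The series `1/(1-X) = 1 + X + X² + ⋯`. -/
noncomputable def Hs : PowerSeries ℚ := invUnitsSub (1 : ℚˣ)

theorem coeff_Hs (n : ℕ) : coeff n Hs = 1 := by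
  simp [Hs, coeff_invUnitsSub]

theorem one_sub_mul_Hs : (1 - X) * Hs = (1 : PowerSeries ℚ) := by
  have h := invUnitsSub_mul_sub (R := ℚ) 1
  simp only [Units.val_one, map_one] at h
  rw [mul_comm]
  exact h

theorem coeff_HsHs (n : ℕ) : coeff n (Hs * Hs) = n + 1 := by
  rw [coeff_mul]
  simp [coeff_Hs, Finset.Nat.card_antidiagonal]

theorem coeff_PhiSq (n : ℕ) : coeff n (Phi * Phi)
    = ((∑ k ∈ Finset.range (n + 1), count k * count (n - k) : ℕ) : ℚ) := by
  rw [coeff_mul, Finset.Nat.sum_antidiagonal_eq_sum_range_succ_mk]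
  push_cast
  simp [Phi]

theorem phi_key : Phi = X ^ 3 * (Hs * Hs) + X * Phi + X * Phi + X * Phi
    + X * (Phi * Phi) + X * (Phi * Phi) := by
  ext n
  rw [map_add, map_add, map_add, map_add, map_add]
  cases n with
  | zero =>
    simp [Phi, count_zero, coeff_zero_X_mul, coeff_X_pow_mul']
  | succ n =>
    simp only [coeff_succ_X_mul]
    rw [coeff_X_pow_mul', coeff_PhiSq]
    simp only [Phi, coeff_mk]
    rw [count_succ n]
    rcases le_or_gt 2 n with h | h
    · rw [if_pos (by omega), coeff_HsHs,
        show n + 1 - 2 = (n - 2) + 1 from by omega,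
        show n + 1 - 3 = n - 2 from by omega]
      push_cast
      ring
    · rw [if_neg (by omega), show n + 1 - 2 = 0 from by omega]
      push_cast
      ring


open PowerSeries in
/-- `(1 − X)²·Φ(X) = X³ + (1 − X)²·(3X·Φ(X) + 2X·Φ(X)²)`, equivalently
`Φ = X·(X/(1−X))² + 2X·Φ + X·Φ + 2X·Φ²`, the summands corresponding to atoms,
the two quantifiers, negation, and the two binary connectives. -/
theorem phi_algebraic_equation :
    (1 - X) ^ 2 * Phi
      = X ^ 3 + (1 - X) ^ 2 * (3 * X * Phi + 2 * X * Phi ^ 2) := by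
  have h2 : (1 - X) ^ 2 * (Hs * Hs) = 1 := by
    calc (1 - X) ^ 2 * (Hs * Hs) = ((1 - X) * Hs) * ((1 - X) * Hs) := by ring
    _ = 1 := by rw [one_sub_mul_Hs, one_mul]
  linear_combination ((1 - X) ^ 2) * phi_key + (X ^ 3) * h2
end

section
/- For each m ∈ ℕ let Φ_m(X) = ∑_{n≥0} count_m(n)·Xⁿ be the generating function (formal power series over ℚ) of the number count_m(n) of m-open formulae of size n. Then for every m ∈ ℕ, (1 − X)²·Φ_m(X) = X³·(1 − X^m)² + (1 − X)²·( 2X·Φ_{m+1}(X) + X·Φ_m(X) + 2X·Φ_m(X)² ). -/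
deriving instance DecidableEq for Fml

open Finset in
def FS : ℕ → ℕ → Finset Fml
  | _, 0 => ∅
  | m, n+1 =>
      (((Finset.range m ×ˢ Finset.range m).filter fun p => p.1 + p.2 + 3 = n + 1).image
        fun p => Fml.mem p.1 p.2)
      ∪ ((FS m n).image Fml.neg)
      ∪ ((Finset.HasAntidiagonal.antidiagonal n).attach.biUnion fun p =>
          ((FS m p.1.1 ×ˢ FS m p.1.2).image fun q => Fml.conj q.1 q.2))
      ∪ ((Finset.HasAntidiagonal.antidiagonal n).attach.biUnion fun p =>
          ((FS m p.1.1 ×ˢ FS m p.1.2).image fun q => Fml.disj q.1 q.2))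
      ∪ ((FS (m+1) n).image Fml.all)
      ∪ ((FS (m+1) n).image Fml.ex)
termination_by m n => n
decreasing_by
  all_goals first
    | omega
    | (have h := Finset.HasAntidiagonal.mem_antidiagonal.mp p.2; omega)


lemma mem_FS : ∀ (φ : Fml) (m n : ℕ), φ ∈ FS m n ↔ (φ.OpenAt m ∧ φ.size = n) := by
  intro φ
  induction φ with
  | mem i j =>
      intro m n
      cases n with
      | zero => simp [FS, Fml.size]
      | succ n =>
          simp [FS, Fml.size, Fml.OpenAt, Finset.mem_filter, Finset.mem_product]
  | neg φ ih =>
      intro m n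
      cases n with
      | zero => simp [FS, Fml.size]
      | succ n => simp [FS, Fml.size, Fml.OpenAt, ih]
  | conj φ ψ ihφ ihψ =>
      intro m n
      cases n with
      | zero => simp [FS, Fml.size]
      | succ n =>
          simp [FS, Fml.size, Fml.OpenAt, ihφ, ihψ]
          exact and_assoc.symm
  | disj φ ψ ihφ ihψ =>
      intro m n
      cases n with
      | zero => simp [FS, Fml.size]
      | succ n =>
          simp [FS, Fml.size, Fml.OpenAt, ihφ, ihψ]
          exact and_assoc.symm
  | all φ ih =>
      intro m n
      cases n with
      | zero => simp [FS, Fml.size]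
      | succ n => simp [FS, Fml.size, Fml.OpenAt, ih]
  | ex φ ih =>
      intro m n
      cases n with
      | zero => simp [FS, Fml.size]
      | succ n => simp [FS, Fml.size, Fml.OpenAt, ih]


def atomCount (m k : ℕ) : ℕ :=
  (((Finset.range m) ×ˢ (Finset.range m)).filter fun p => p.1 + p.2 + 3 = k).card

/-- head-constructor tag -/
def Fml.hd : Fml → ℕ
  | mem _ _  => 0
  | neg _    => 1
  | conj _ _ => 2
  | disj _ _ => 3
  | all _    => 4
  | ex _     => 5

open Finset in
lemma card_FS_succ (m n : ℕ) :
    (FS m (n+1)).card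
      = atomCount m (n+1) + (FS m n).card
        + (∑ p ∈ Finset.HasAntidiagonal.antidiagonal n, (FS m p.1).card * (FS m p.2).card)
        + (∑ p ∈ Finset.HasAntidiagonal.antidiagonal n, (FS m p.1).card * (FS m p.2).card)
        + (FS (m+1) n).card + (FS (m+1) n).card := by
  have hsize : ∀ (φ : Fml) (m k : ℕ), φ ∈ FS m k → φ.size = k := fun φ m k h =>
    ((mem_FS φ m k).mp h).2
  have hdisj : ∀ (s t : Finset Fml) (i j : ℕ), i ≠ j →
      (∀ x ∈ s, Fml.hd x = i) → (∀ x ∈ t, Fml.hd x = j) → Disjoint s t :=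
    fun s t i j hij hs ht => Finset.disjoint_left.mpr fun x hx hx' =>
      hij ((hs x hx) ▸ (ht x hx') ▸ rfl)
  have him : ∀ {α : Type} (c : α → Fml) (k : ℕ), (∀ y, Fml.hd (c y) = k) →
      ∀ (s : Finset α), ∀ x ∈ s.image c, Fml.hd x = k := by
    intro α c k hc s x hx
    obtain ⟨p, _, rfl⟩ := Finset.mem_image.mp hx
    exact hc p
  have hbi : ∀ {α : Type} (s : Finset α) (t : α → Finset Fml) (k : ℕ),
      (∀ p, ∀ x ∈ t p, Fml.hd x = k) → ∀ x ∈ s.biUnion t, Fml.hd x = k := by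
    intro α s t k ht x hx
    obtain ⟨p, _, hp⟩ := Finset.mem_biUnion.mp hx
    exact ht p x hp
  have hconj : ∀ (mm : ℕ) (s : Finset (ℕ × ℕ)) (cstr : Fml → Fml → Fml),
      (∀ a b c d : Fml, cstr a b = cstr c d → a = c ∧ b = d) →
      (∀ x ∈ s.attach, ∀ y ∈ s.attach, x ≠ y →
        Disjoint ((FS mm x.1.1 ×ˢ FS mm x.1.2).image fun q => cstr q.1 q.2)
          ((FS mm y.1.1 ×ˢ FS mm y.1.2).image fun q => cstr q.1 q.2)) := by
    intro mm s cstr hinj x _ y _ hxy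
    rw [Finset.disjoint_left]
    rintro z hz hz'
    simp only [Finset.mem_image, Finset.mem_product, Prod.exists] at hz hz'
    obtain ⟨a, b, ⟨ha, hb⟩, rfl⟩ := hz
    obtain ⟨c, d, ⟨hc, hd⟩, he⟩ := hz'
    obtain ⟨rfl, rfl⟩ := hinj _ _ _ _ he.symm
    exact hxy (Subtype.ext (Prod.ext (by rw [← hsize a mm x.1.1 ha, ← hsize a mm y.1.1 hc])
      (by rw [← hsize b mm x.1.2 hb, ← hsize b mm y.1.2 hd])))
  have hinjc : ∀ a b c d : Fml, Fml.conj a b = Fml.conj c d → a = c ∧ b = d := by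
    intro a b c d h; exact ⟨by injection h, by injection h⟩
  have hinjd : ∀ a b c d : Fml, Fml.disj a b = Fml.disj c d → a = c ∧ b = d := by
    intro a b c d h; exact ⟨by injection h, by injection h⟩
  have h0 := him (fun p : ℕ × ℕ => Fml.mem p.1 p.2) 0 (fun _ => rfl)
  have h1 := him Fml.neg 1 (fun _ => rfl)
  have h4 := him Fml.all 4 (fun _ => rfl)
  have h5 := him Fml.ex 5 (fun _ => rfl)
  have h2 : ∀ (mm : ℕ) (s : Finset (ℕ × ℕ)),
      ∀ x ∈ s.attach.biUnion (fun p => ((FS mm p.1.1 ×ˢ FS mm p.1.2).image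
        fun q => Fml.conj q.1 q.2)), Fml.hd x = 2 :=
    fun mm s => hbi _ _ 2 (fun p => him (fun q : Fml × Fml => Fml.conj q.1 q.2) 2 (fun _ => rfl) _)
  have h3 : ∀ (mm : ℕ) (s : Finset (ℕ × ℕ)),
      ∀ x ∈ s.attach.biUnion (fun p => ((FS mm p.1.1 ×ˢ FS mm p.1.2).image
        fun q => Fml.disj q.1 q.2)), Fml.hd x = 3 :=
    fun mm s => hbi _ _ 3 (fun p => him (fun q : Fml × Fml => Fml.disj q.1 q.2) 3 (fun _ => rfl) _)
  rw [FS]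
  rw [Finset.card_union_of_disjoint (by
        simp only [Finset.disjoint_union_left]
        exact ⟨⟨⟨⟨hdisj _ _ 0 5 (by decide) (h0 _) (h5 _),
          hdisj _ _ 1 5 (by decide) (h1 _) (h5 _)⟩,
          hdisj _ _ 2 5 (by decide) (h2 _ _) (h5 _)⟩,
          hdisj _ _ 3 5 (by decide) (h3 _ _) (h5 _)⟩,
          hdisj _ _ 4 5 (by decide) (h4 _) (h5 _)⟩),
      Finset.card_union_of_disjoint (by
        simp only [Finset.disjoint_union_left]
        exact ⟨⟨⟨hdisj _ _ 0 4 (by decide) (h0 _) (h4 _),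
          hdisj _ _ 1 4 (by decide) (h1 _) (h4 _)⟩,
          hdisj _ _ 2 4 (by decide) (h2 _ _) (h4 _)⟩,
          hdisj _ _ 3 4 (by decide) (h3 _ _) (h4 _)⟩),
      Finset.card_union_of_disjoint (by
        simp only [Finset.disjoint_union_left]
        exact ⟨⟨hdisj _ _ 0 3 (by decide) (h0 _) (h3 _ _),
          hdisj _ _ 1 3 (by decide) (h1 _) (h3 _ _)⟩,
          hdisj _ _ 2 3 (by decide) (h2 _ _) (h3 _ _)⟩),
      Finset.card_union_of_disjoint (by
        simp only [Finset.disjoint_union_left]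
        exact ⟨hdisj _ _ 0 2 (by decide) (h0 _) (h2 _ _),
          hdisj _ _ 1 2 (by decide) (h1 _) (h2 _ _)⟩),
      Finset.card_union_of_disjoint
        (hdisj _ _ 0 1 (by decide) (h0 _) (h1 _))]
  rw [Finset.card_biUnion (hconj m _ _ hinjc), Finset.card_biUnion (hconj m _ _ hinjd)]
  congr 1
  · congr 1
    · congr 1
      · congr 1
        · congr 1
          · exact Finset.card_image_of_injective _ (fun p q h => by
              simpa [Prod.ext_iff] using h)
          · exact Finset.card_image_of_injective _ (fun a b h => by simpa using h)
        · rw [← Finset.sum_attach (Finset.HasAntidiagonal.antidiagonal n)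
            (fun p => (FS m p.1).card * (FS m p.2).card)]
          exact Finset.sum_congr rfl fun p _ => by
            rw [Finset.card_image_of_injective _ (fun q r h => by
              simpa [Prod.ext_iff] using hinjc _ _ _ _ h), Finset.card_product]
      · rw [← Finset.sum_attach (Finset.HasAntidiagonal.antidiagonal n)
          (fun p => (FS m p.1).card * (FS m p.2).card)]
        exact Finset.sum_congr rfl fun p _ => by
          rw [Finset.card_image_of_injective _ (fun q r h => by
            simpa [Prod.ext_iff] using hinjd _ _ _ _ h), Finset.card_product]
    · exact Finset.card_image_of_injective _ (fun a b h => by simpa using h)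
  · exact Finset.card_image_of_injective _ (fun a b h => by simpa using h)

/-- The generating function `Φ_m(X) = ∑_{n≥0} count_m(n)·Xⁿ` of the number of
`m`-open formulae of size `n`, as a formal power series over `ℚ`. -/
noncomputable def PhiOpen (m : ℕ) : PowerSeries ℚ :=
  PowerSeries.mk fun n => (countOpen m n : ℚ)


lemma countOpen_eq (m n : ℕ) : countOpen m n = (FS m n).card := by
  rw [countOpen, Nat.card_congr (Equiv.subtypeEquivRight fun φ => (mem_FS φ m n).symm),
    Nat.card_eq_fintype_card, Fintype.card_coe]

lemma atomCount_lt3 (m k : ℕ) (h : k < 3) : atomCount m k = 0 := by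
  rw [atomCount, Finset.card_eq_zero, Finset.filter_eq_empty_iff]
  intro p _; omega

lemma atomCount_ge3 (m k : ℕ) (h : 3 ≤ k) :
    atomCount m k = ((Finset.HasAntidiagonal.antidiagonal (k-3)).filter fun p => p.1 < m ∧ p.2 < m).card := by
  rw [atomCount]
  congr 1
  ext p
  simp only [Finset.mem_filter, Finset.mem_product, Finset.mem_range, Finset.HasAntidiagonal.mem_antidiagonal]
  omega

open PowerSeries in
lemma phi_rec (m : ℕ) : PhiOpen m
    = (PowerSeries.mk fun k => (atomCount m k : ℚ)) + 2 * X * PhiOpen (m+1)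
      + X * PhiOpen m + 2 * X * (PhiOpen m)^2 := by
  have h2 : ∀ f : PowerSeries ℚ, (2 : PowerSeries ℚ) * X * f = X * f + X * f := fun f => by ring
  rw [h2, h2]
  ext k
  simp only [PhiOpen, map_add, PowerSeries.coeff_mk]
  cases k with
  | zero =>
      simp [PowerSeries.coeff_zero_eq_constantCoeff, countOpen_eq, FS,
        atomCount_lt3 m 0 (by norm_num)]
  | succ k =>
      simp only [PowerSeries.coeff_succ_X_mul]
      simp only [pow_two, PowerSeries.coeff_mul, PowerSeries.coeff_mk]
      simp only [countOpen_eq, card_FS_succ m k]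
      push_cast
      ring

open PowerSeries in
lemma atom_series (m : ℕ) :
    ((1 : PowerSeries ℚ) - X)^2 * (PowerSeries.mk fun k => (atomCount m k : ℚ))
      = X^3 * (1 - X^m)^2 := by
  have hc : ∀ t : ℕ, (PowerSeries.coeff (R := ℚ) t) (∑ i ∈ Finset.range m, X^i)
      = if t < m then 1 else 0 := by
    intro t
    rw [map_sum]
    simp [PowerSeries.coeff_X_pow, Finset.sum_ite_eq]
  have hg : (PowerSeries.mk fun k => (atomCount m k : ℚ))
      = X^3 * (∑ i ∈ Finset.range m, X^i)^2 := by
    ext k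
    rw [PowerSeries.coeff_mk, mul_comm ((X : PowerSeries ℚ)^3) _,
      PowerSeries.coeff_mul_X_pow']
    by_cases h : 3 ≤ k
    · rw [if_pos h, pow_two, PowerSeries.coeff_mul, atomCount_ge3 m k h, Finset.card_filter]
      push_cast
      refine Finset.sum_congr rfl fun p hp => ?_
      rw [hc, hc]
      by_cases h1 : p.1 < m <;> by_cases h2 : p.2 < m <;> simp [h1, h2]
    · rw [if_neg h, atomCount_lt3 m k (by omega), Nat.cast_zero]
  have hgeom : ((1 : PowerSeries ℚ) - X) * (∑ i ∈ Finset.range m, X^i) = 1 - X^m := by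
    have h := geom_sum_mul (X : PowerSeries ℚ) m
    linear_combination -h
  calc ((1 : PowerSeries ℚ) - X)^2 * (PowerSeries.mk fun k => (atomCount m k : ℚ))
      = X^3 * (((1 : PowerSeries ℚ) - X) * (∑ i ∈ Finset.range m, X^i))^2 := by
        rw [hg]; ring
    _ = X^3 * (1 - X^m)^2 := by rw [hgeom]

open PowerSeries in
/-- For every `m`,
`(1 − X)²·Φ_m(X) = X³·(1 − X^m)² + (1 − X)²·(2X·Φ_{m+1}(X) + X·Φ_m(X) + 2X·Φ_m(X)²)`. -/
theorem phiOpen_algebraic_equation (m : ℕ) :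
    (1 - X) ^ 2 * PhiOpen m
      = X ^ 3 * (1 - X ^ m) ^ 2
        + (1 - X) ^ 2 * (2 * X * PhiOpen (m + 1) + X * PhiOpen m + 2 * X * (PhiOpen m) ^ 2) := by
  conv_lhs => rw [phi_rec m]
  linear_combination atom_series m
end

section
/- A theory T in the first-order language with one binary relation symbol is inconsistent (unsatisfiable) if and only if the asymptotic density of its theorems exists and equals 1, i.e. if and only if |{φ : |φ| = n and T ⊨ φ}| / count_0(n) → 1 as n → ∞. -/
/-- Extend a De Bruijn environment with a new value for index `0`. -/
def Fml.consEnv {M : Type} (a : M) (env : ℕ → M) : ℕ → M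
  | 0 => a
  | n + 1 => env n

/-- Tarskian satisfaction of a De Bruijn formula in a structure `(M, r)` with
one binary relation `r`, under the environment `env`. -/
def Fml.Sat {M : Type} (r : M → M → Prop) : (ℕ → M) → Fml → Prop
  | env, mem i j  => r (env i) (env j)
  | env, neg φ    => ¬ φ.Sat r env
  | env, conj φ ψ => φ.Sat r env ∧ ψ.Sat r env
  | env, disj φ ψ => φ.Sat r env ∨ ψ.Sat r env
  | env, all φ    => ∀ a : M, φ.Sat r (consEnv a env)
  | env, ex φ     => ∃ a : M, φ.Sat r (consEnv a env)

/-- `Models T φ` (`T ⊨ φ`): `φ` holds in every nonempty model of `T` over the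
language with one binary relation symbol. -/
def Models (T : Set Fml) (φ : Fml) : Prop :=
  ∀ (M : Type) (r : M → M → Prop) (env : ℕ → M),
    (∀ ψ ∈ T, ψ.Sat r env) → φ.Sat r env

/-- A theory is consistent when it is satisfiable, i.e. has a nonempty model. -/
def Satisfiable (T : Set Fml) : Prop :=
  ∃ (M : Type) (r : M → M → Prop) (env : ℕ → M), ∀ ψ ∈ T, ψ.Sat r env

/-- The number of theorems of `T` (sentences `φ` with `T ⊨ φ`) of size `n`. -/
noncomputable def countThm (T : Set Fml) (n : ℕ) : ℕ :=
  Nat.card {φ : Fml // φ.OpenAt 0 ∧ Models T φ ∧ φ.size = n}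

namespace FmlAux

open Fml List

def enc : Fml → List (Fin 8)
  | .mem i j  => 2 :: (List.replicate i 0 ++ 1 :: (List.replicate j 0 ++ [1]))
  | .neg φ    => 3 :: enc φ
  | .conj φ ψ => 4 :: (enc φ ++ enc ψ)
  | .disj φ ψ => 5 :: (enc φ ++ enc ψ)
  | .all φ    => 6 :: enc φ
  | .ex φ     => 7 :: enc φ

lemma enc_length : ∀ φ : Fml, (enc φ).length = φ.size := by
  intro φ
  induction φ with
  | mem i j => simp [enc, Fml.size]; omega
  | neg φ ih => simp [enc, Fml.size, ih]
  | conj φ ψ ih1 ih2 => simp [enc, Fml.size, ih1, ih2]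
  | disj φ ψ ih1 ih2 => simp [enc, Fml.size, ih1, ih2]
  | all φ ih => simp [enc, Fml.size, ih]
  | ex φ ih => simp [enc, Fml.size, ih]

lemma unary_inj : ∀ (i j : ℕ) (s t : List (Fin 8)),
    List.replicate i 0 ++ 1 :: s = List.replicate j 0 ++ 1 :: t → i = j ∧ s = t := by
  intro i
  induction i with
  | zero =>
    intro j s t h
    cases j with
    | zero => simpa using h
    | succ j => simp [List.replicate_succ] at h
  | succ i ih =>
    intro j s t h
    cases j with
    | zero => simp [List.replicate_succ] at h
    | succ j =>
      simp only [List.replicate_succ, List.cons_append, List.cons.injEq, true_and] at h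
      obtain ⟨rfl, rfl⟩ := ih j s t h
      exact ⟨rfl, rfl⟩

lemma enc_prefix : ∀ φ ψ : Fml, ∀ s t : List (Fin 8),
    enc φ ++ s = enc ψ ++ t → φ = ψ ∧ s = t := by
  intro φ
  induction φ with
  | mem i j =>
    intro ψ s t h
    cases ψ <;> simp only [enc, List.cons_append, List.cons.injEq, List.append_assoc, true_and, List.nil_append] at h
    case mem i' j' =>
      obtain ⟨hi, h2⟩ := unary_inj _ _ _ _ h
      obtain ⟨hj, hs⟩ := unary_inj _ _ _ _ h2
      exact ⟨by rw [hi, hj], hs⟩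
    all_goals exact absurd h.1 (by decide)
  | neg φ ih =>
    intro ψ s t h
    cases ψ <;> simp only [enc, List.cons_append, List.cons.injEq, List.append_assoc, true_and, List.nil_append] at h
    case neg ψ =>
      obtain ⟨rfl, rfl⟩ := ih _ _ _ h
      exact ⟨rfl, rfl⟩
    all_goals exact absurd h.1 (by decide)
  | conj φ₁ φ₂ ih1 ih2 =>
    intro ψ s t h
    cases ψ <;> simp only [enc, List.cons_append, List.cons.injEq, List.append_assoc, true_and, List.nil_append] at h
    case conj ψ₁ ψ₂ =>
      obtain ⟨rfl, h2⟩ := ih1 _ _ _ h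
      obtain ⟨rfl, rfl⟩ := ih2 _ _ _ h2
      exact ⟨rfl, rfl⟩
    all_goals exact absurd h.1 (by decide)
  | disj φ₁ φ₂ ih1 ih2 =>
    intro ψ s t h
    cases ψ <;> simp only [enc, List.cons_append, List.cons.injEq, List.append_assoc, true_and, List.nil_append] at h
    case disj ψ₁ ψ₂ =>
      obtain ⟨rfl, h2⟩ := ih1 _ _ _ h
      obtain ⟨rfl, rfl⟩ := ih2 _ _ _ h2
      exact ⟨rfl, rfl⟩
    all_goals exact absurd h.1 (by decide)
  | all φ ih =>
    intro ψ s t h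
    cases ψ <;> simp only [enc, List.cons_append, List.cons.injEq, List.append_assoc, true_and, List.nil_append] at h
    case all ψ =>
      obtain ⟨rfl, rfl⟩ := ih _ _ _ h
      exact ⟨rfl, rfl⟩
    all_goals exact absurd h.1 (by decide)
  | ex φ ih =>
    intro ψ s t h
    cases ψ <;> simp only [enc, List.cons_append, List.cons.injEq, List.append_assoc, true_and, List.nil_append] at h
    case ex ψ =>
      obtain ⟨rfl, rfl⟩ := ih _ _ _ h
      exact ⟨rfl, rfl⟩
    all_goals exact absurd h.1 (by decide)

lemma enc_injective : Function.Injective enc := by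
  intro φ ψ h
  exact (enc_prefix φ ψ [] [] (by simpa using h)).1

instance finite_size (n : ℕ) : Finite {φ : Fml // φ.size = n} := by
  apply Finite.of_injective
    (f := fun φ : {φ : Fml // φ.size = n} =>
      (fun i : Fin n => (enc φ.1).get (Fin.cast (by rw [enc_length, φ.2]) i)))
  intro φ ψ h
  apply Subtype.ext
  apply enc_injective
  apply List.ext_get (by rw [enc_length, enc_length, φ.2, ψ.2])
  intro k h1 h2
  have hk : k < n := by rwa [enc_length, φ.2] at h1
  exact congrFun h ⟨k, hk⟩

lemma card_size_le (n : ℕ) : Nat.card {φ : Fml // φ.size = n} ≤ 8 ^ n := by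
  have h := Nat.card_le_card_of_injective
    (f := fun φ : {φ : Fml // φ.size = n} =>
      (fun i : Fin n => (enc φ.1).get (Fin.cast (by rw [enc_length, φ.2]) i)))
    (by
      intro φ ψ h
      apply Subtype.ext
      apply enc_injective
      apply List.ext_get (by rw [enc_length, enc_length, φ.2, ψ.2])
      intro k h1 h2
      have hk : k < n := by rwa [enc_length, φ.2] at h1
      exact congrFun h ⟨k, hk⟩)
  calc Nat.card {φ : Fml // φ.size = n} ≤ Nat.card (Fin n → Fin 8) := h
    _ = 8 ^ n := by simp [Nat.card_eq_fintype_card]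

lemma sub_inj {P W : Fml → Prop} (h : ∀ φ, P φ → W φ) :
    Function.Injective (fun x : {φ : Fml // P φ} => (⟨x.1, h x.1 x.2⟩ : {φ : Fml // W φ})) := by
  intro a b hab
  apply Subtype.ext
  have := congrArg Subtype.val hab
  simpa using this

lemma finite_of_subset {R : Fml → Prop} (n : ℕ) (h : ∀ φ, R φ → φ.size = n) :
    Finite {φ : Fml // R φ} :=
  Finite.of_injective _ (sub_inj h)

lemma card_le_of_maps {R S : Fml → Prop} (f : Fml → Fml) [Finite {φ : Fml // S φ}]
    (hf : ∀ φ, R φ → S (f φ)) (hinj : Function.Injective f) :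
    Nat.card {φ : Fml // R φ} ≤ Nat.card {φ : Fml // S φ} := by
  apply Nat.card_le_card_of_injective
    (f := fun x : {φ : Fml // R φ} => (⟨f x.1, hf x.1 x.2⟩ : {φ : Fml // S φ}))
  intro a b hab
  apply Subtype.ext
  apply hinj
  have := congrArg Subtype.val hab
  simpa using this

lemma card_sub_le {P W : Fml → Prop} [Finite {φ : Fml // W φ}] (h : ∀ φ, P φ → W φ) :
    Nat.card {φ : Fml // P φ} ≤ Nat.card {φ : Fml // W φ} :=
  Nat.card_le_card_of_injective _ (sub_inj h)

lemma card_add_le {R S W : Fml → Prop} [Finite {φ : Fml // W φ}]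
    (hR : ∀ φ, R φ → W φ) (hS : ∀ φ, S φ → W φ) (hd : ∀ φ, R φ → S φ → False) :
    Nat.card {φ : Fml // R φ} + Nat.card {φ : Fml // S φ} ≤ Nat.card {φ : Fml // W φ} := by
  haveI : Finite {φ : Fml // R φ} := Finite.of_injective _ (sub_inj hR)
  haveI : Finite {φ : Fml // S φ} := Finite.of_injective _ (sub_inj hS)
  rw [← Nat.card_sum]
  apply Nat.card_le_card_of_injective
    (f := fun x : {φ : Fml // R φ} ⊕ {φ : Fml // S φ} =>
      Sum.elim (fun a : {φ : Fml // R φ} => (⟨a.1, hR a.1 a.2⟩ : {φ : Fml // W φ}))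
        (fun a : {φ : Fml // S φ} => (⟨a.1, hS a.1 a.2⟩ : {φ : Fml // W φ})) x)
  rintro (a | a) (b | b) hab
  · exact congrArg Sum.inl (sub_inj hR hab)
  · exfalso
    have hv : a.1 = b.1 := by simpa using congrArg Subtype.val hab
    exact hd a.1 a.2 (hv ▸ b.2)
  · exfalso
    have hv : a.1 = b.1 := by simpa using congrArg Subtype.val hab
    exact hd b.1 b.2 (hv ▸ a.2)
  · exact congrArg Sum.inr (sub_inj hS hab)

lemma card_le_add {R S W : Fml → Prop} [Finite {φ : Fml // R φ}] [Finite {φ : Fml // S φ}]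
    (h : ∀ φ, W φ → R φ ∨ S φ) :
    Nat.card {φ : Fml // W φ} ≤ Nat.card {φ : Fml // R φ} + Nat.card {φ : Fml // S φ} := by
  classical
  rw [← Nat.card_sum]
  apply Nat.card_le_card_of_injective
    (f := fun x : {φ : Fml // W φ} =>
      if hx : R x.1 then Sum.inl (⟨x.1, hx⟩ : {φ : Fml // R φ})
      else Sum.inr (⟨x.1, (h x.1 x.2).resolve_left hx⟩ : {φ : Fml // S φ}))
  intro a b hab
  by_cases ha : R a.1 <;> by_cases hb : R b.1 <;> simp [ha, hb] at hab <;> exact Subtype.ext hab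

def tower : ℕ → Fml
  | 0 => .all (.mem 0 0)
  | k + 1 => .all (tower k)

lemma tower_size (k : ℕ) : (tower k).size = k + 4 := by
  induction k with
  | zero => rfl
  | succ k ih => simp [tower, Fml.size, ih]

lemma tower_open (k : ℕ) : ∀ m, (tower k).OpenAt m := by
  induction k with
  | zero => intro m; exact ⟨Nat.succ_pos m, Nat.succ_pos m⟩
  | succ k ih => intro m; exact ih (m + 1)


end FmlAux

open Filter in
/-- A theory `T` (a set of sentences) is inconsistent (unsatisfiable) if and
only if the asymptotic density of its theorems exists and equals `1`:
`|{φ : |φ| = n ∧ T ⊨ φ}| / count_0(n) → 1` as `n → ∞`. -/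
theorem inconsistent_iff_density_one (T : Set Fml) (hT : ∀ ψ ∈ T, ψ.OpenAt 0) :
    ¬ Satisfiable T ↔
      Tendsto (fun n : ℕ => (countThm T n : ℝ) / (countOpen 0 n : ℝ))
        atTop (nhds 1) := by
  classical
  haveI hfinO : ∀ n : ℕ, Finite {φ : Fml // φ.OpenAt 0 ∧ φ.size = n} :=
    fun n => FmlAux.finite_of_subset n (fun φ h => h.2)
  have hpos : ∀ n : ℕ, 4 ≤ n → 0 < countOpen 0 n := by
    intro n hn
    haveI : Nonempty {φ : Fml // φ.OpenAt 0 ∧ φ.size = n} :=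
      ⟨⟨FmlAux.tower (n - 4), FmlAux.tower_open _ _, by rw [FmlAux.tower_size]; omega⟩⟩
    exact Nat.card_pos
  have hcb : ∀ n : ℕ, countOpen 0 n ≤ 8 ^ n := by
    intro n
    calc countOpen 0 n ≤ Nat.card {φ : Fml // φ.size = n} :=
          FmlAux.card_sub_le (fun φ h => h.2)
      _ ≤ 8 ^ n := FmlAux.card_size_le n
  constructor
  · -- inconsistent → density 1
    intro hunsat
    have hall : ∀ φ, Models T φ := fun φ M r env h => absurd ⟨M, r, env, h⟩ hunsat
    have hEq : ∀ n, countThm T n = countOpen 0 n := by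
      intro n
      exact Nat.card_congr (Equiv.subtypeEquivRight (fun φ => by
        constructor
        · rintro ⟨h1, -, h3⟩; exact ⟨h1, h3⟩
        · rintro ⟨h1, h3⟩; exact ⟨h1, hall φ, h3⟩))
    have hEv : (fun _ : ℕ => (1 : ℝ)) =ᶠ[atTop]
        fun n : ℕ => (countThm T n : ℝ) / (countOpen 0 n : ℝ) := by
      filter_upwards [Filter.eventually_ge_atTop 4] with n hn
      rw [hEq n, div_self]
      exact_mod_cast (hpos n hn).ne'
    exact Filter.Tendsto.congr' hEv tendsto_const_nhds
  · -- density 1 → inconsistent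
    intro htend hsat
    obtain ⟨M, r, env, hM⟩ := hsat
    set Fls : ℕ → ℕ :=
      fun n => Nat.card {φ : Fml // φ.OpenAt 0 ∧ ¬ φ.Sat r env ∧ φ.size = n} with hFls
    set Tru : ℕ → ℕ :=
      fun n => Nat.card {φ : Fml // φ.OpenAt 0 ∧ φ.Sat r env ∧ φ.size = n} with hTru
    have h1 : ∀ n, countThm T n + Fls n ≤ countOpen 0 n := by
      intro n
      exact FmlAux.card_add_le (W := fun φ => φ.OpenAt 0 ∧ φ.size = n)
        (fun φ h => ⟨h.1, h.2.2⟩) (fun φ h => ⟨h.1, h.2.2⟩)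
        (fun φ h h' => h'.2.1 (h.2.1 M r env hM))
    have h2 : ∀ n, countOpen 0 n ≤ Tru n + Fls n := by
      intro n
      haveI : Finite {φ : Fml // φ.OpenAt 0 ∧ φ.Sat r env ∧ φ.size = n} :=
        FmlAux.finite_of_subset n (fun φ h => h.2.2)
      haveI : Finite {φ : Fml // φ.OpenAt 0 ∧ ¬ φ.Sat r env ∧ φ.size = n} :=
        FmlAux.finite_of_subset n (fun φ h => h.2.2)
      exact FmlAux.card_le_add (fun φ h => by
        by_cases hs : φ.Sat r env
        · exact Or.inl ⟨h.1, hs, h.2⟩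
        · exact Or.inr ⟨h.1, hs, h.2⟩)
    have h3 : ∀ n, Tru n ≤ Fls (n + 1) := by
      intro n
      haveI : Finite {φ : Fml // φ.OpenAt 0 ∧ ¬ φ.Sat r env ∧ φ.size = n + 1} :=
        FmlAux.finite_of_subset (n + 1) (fun φ h => h.2.2)
      exact FmlAux.card_le_of_maps Fml.neg
        (fun φ h => ⟨h.1, fun hn => hn h.2.1, by simp [Fml.size, h.2.2]⟩)
        (fun a b hab => by cases hab; rfl)
    have hev : ∀ᶠ n in atTop,
        (31 / 32 : ℝ) < (countThm T n : ℝ) / (countOpen 0 n : ℝ) :=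
      htend.eventually (eventually_gt_nhds (by norm_num))
    obtain ⟨N₀, hN₀⟩ := Filter.eventually_atTop.mp hev
    set N := max N₀ 4 with hN
    have key : ∀ n, N ≤ n → 32 * Fls n < countOpen 0 n := by
      intro n hn
      have hc : 0 < countOpen 0 n := hpos n (le_trans (le_max_right _ _) hn)
      have hr := hN₀ n (le_trans (le_max_left _ _) hn)
      have hle := h1 n
      have hcR : (0 : ℝ) < (countOpen 0 n : ℝ) := by exact_mod_cast hc
      have ht : (31 : ℝ) / 32 * (countOpen 0 n : ℝ) < (countThm T n : ℝ) :=
        (lt_div_iff₀ hcR).mp hr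
      have hfR : (countThm T n : ℝ) + (Fls n : ℝ) ≤ (countOpen 0 n : ℝ) := by
        exact_mod_cast hle
      have : (32 : ℝ) * (Fls n : ℝ) < (countOpen 0 n : ℝ) := by linarith
      exact_mod_cast this
    have growth : ∀ n, N ≤ n → 31 * countOpen 0 n ≤ countOpen 0 (n + 1) := by
      intro n hn
      have k1 := key n hn
      have k2 := key (n + 1) (le_trans hn (Nat.le_succ n))
      have g2 := h2 n
      have g3 := h3 n
      omega
    have iter : ∀ k : ℕ, 31 ^ k * countOpen 0 N ≤ countOpen 0 (N + k) := by
      intro k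
      induction k with
      | zero => simp
      | succ k ih =>
        calc 31 ^ (k + 1) * countOpen 0 N = 31 * (31 ^ k * countOpen 0 N) := by ring
          _ ≤ 31 * countOpen 0 (N + k) := Nat.mul_le_mul_left _ ih
          _ ≤ countOpen 0 (N + k + 1) := growth (N + k) (Nat.le_add_right _ _)
    have hcN : 1 ≤ countOpen 0 N := hpos N (le_max_right _ _)
    have hA : 31 ^ (3 * N + 1) ≤ 8 ^ (N + (3 * N + 1)) := by
      calc 31 ^ (3 * N + 1) = 31 ^ (3 * N + 1) * 1 := by ring
        _ ≤ 31 ^ (3 * N + 1) * countOpen 0 N := Nat.mul_le_mul_left _ hcN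
        _ ≤ countOpen 0 (N + (3 * N + 1)) := iter _
        _ ≤ 8 ^ (N + (3 * N + 1)) := hcb _
    have hB : (2 : ℕ) ^ (4 * (3 * N + 1)) ≤ 2 ^ (3 * (N + (3 * N + 1))) := by
      calc (2 : ℕ) ^ (4 * (3 * N + 1)) = 16 ^ (3 * N + 1) := by
            rw [pow_mul]; norm_num
        _ ≤ 31 ^ (3 * N + 1) := Nat.pow_le_pow_left (by norm_num) _
        _ ≤ 8 ^ (N + (3 * N + 1)) := hA
        _ = 2 ^ (3 * (N + (3 * N + 1))) := by rw [pow_mul]; norm_num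
    have := (Nat.pow_le_pow_iff_right (by norm_num : 1 < 2)).mp hB
    omega
end
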